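/- arXiv:1903.05040 — 2 statements merged into one kernel-verified Lean document; each statement's English description precedes it below -/
import Mathlib

section
/- Let $w \in C^2((0,\infty);\mathbb{R})$ satisfy $w(r) \geq 0$, $w'(r) \leq 0$, and $r(w'(r)^2 + 2w(r)w''(r)) \geq 2w(r)w'(r)$ for all $r > 0$. Let $g : (0,\infty) \to \mathbb{C}$ be a $C^1$ function such that $\int_0^\infty (w^2 |g'|^2 + (w')^2 |g|^2)\,dr < \infty$ and $\liminf_{r \to 0} w(r)w'(r)|g(r)|^2 = 0$. Then $\int_0^\infty w(r)^2 \frac{|g(r)|^2}{r^2}\,dr \leq 4 \int_0^\infty w(r)^2 |g'(r)|^2\,dr$. -/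
open MeasureTheory Set Filter Real Topology

namespace HardyAux

/-- Pointwise quadratic-form inequality after clearing denominators. -/
lemma ptwise (r W W1 W2 gr gi hr hi : ℝ) (hr0 : 0 < r)
    (hineq : 2*W*W1 ≤ r * (W1^2 + 2*W*W2)) :
    W^2*(gr^2+gi^2)/r^2 ≤ 4*(W^2*(hr^2+hi^2))
      + 4*((((W1)^2 + W*W2)/2 - W*W1/r + W^2/(2*r^2))*(gr^2+gi^2)
        + (W*W1/2 - W^2/(2*r))*(2*(gr*hr + gi*hi))) := by
  have hrne : r ≠ 0 := ne_of_gt hr0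
  have h3 : 0 ≤ (r*(W1^2+2*W*W2) - 2*W*W1)*r*(gr^2+gi^2) :=
    mul_nonneg (mul_nonneg (by linarith) hr0.le) (by positivity)
  have key : 0 ≤ (2*r*W*hr+(r*W1-W)*gr)^2 + (2*r*W*hi+(r*W1-W)*gi)^2
      + (r*(W1^2+2*W*W2) - 2*W*W1)*r*(gr^2+gi^2) :=
    add_nonneg (add_nonneg (sq_nonneg _) (sq_nonneg _)) h3
  have e : (4*(W^2*(hr^2+hi^2))
      + 4*((((W1)^2 + W*W2)/2 - W*W1/r + W^2/(2*r^2))*(gr^2+gi^2)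
        + (W*W1/2 - W^2/(2*r))*(2*(gr*hr + gi*hi)))) - W^2*(gr^2+gi^2)/r^2
      = ((2*r*W*hr+(r*W1-W)*gr)^2 + (2*r*W*hi+(r*W1-W)*gi)^2
        + (r*(W1^2+2*W*W2) - 2*W*W1)*r*(gr^2+gi^2))/r^2 := by
    field_simp
    ring
  linarith [e, div_nonneg key (sq_nonneg r)]

/-- Bound for the boundary term at the left endpoint. -/
lemma bdry (a W W1 G : ℝ) (ha : 0 < a) (hG : 0 ≤ G) :
    -((W*W1/2 - W^2/(2*a))*G) ≤ a*(W1^2*G + W^2*G/a^2) := by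
  have hane : a ≠ 0 := ne_of_gt ha
  have key : 0 ≤ ((a*W1+W)^2 + 3*a^2*W1^2 + W^2)*G :=
    mul_nonneg (by positivity) hG
  have e : a*(W1^2*G + W^2*G/a^2) - (-((W*W1/2 - W^2/(2*a))*G))
      = ((a*W1+W)^2 + 3*a^2*W1^2 + W^2)*G/(4*a) := by
    field_simp
    ring
  linarith [e, div_nonneg key (by linarith : (0:ℝ) ≤ 4*a)]

/-- If `H ≥ 0` is integrable near `0`, then `a * H a` is small for some small `a`. -/
lemma small {H : ℝ → ℝ} (hH : IntegrableOn H (Ioi (0:ℝ)))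
    {ε δ : ℝ} (hε : 0 < ε) (hδ : 0 < δ) :
    ∃ a, 0 < a ∧ a < δ ∧ a * H a ≤ ε := by
  by_contra hcon
  push_neg at hcon
  have hmono : IntegrableOn H (Ioo 0 δ) := hH.mono Ioo_subset_Ioi_self le_rfl
  have hint2 : IntegrableOn (fun x => ε * x ^ (-1:ℝ)) (Ioo (0:ℝ) δ) := by
    apply hmono.mono' ((Measurable.aestronglyMeasurable (by measurability)))
    filter_upwards [ae_restrict_mem measurableSet_Ioo] with x hx
    have hx0 : 0 < x := hx.1
    rw [Real.rpow_neg_one, Real.norm_eq_abs,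
      abs_of_nonneg (mul_nonneg hε.le (inv_nonneg.2 hx0.le)),
      ← div_eq_mul_inv, div_le_iff₀ hx0]
    nlinarith [hcon x hx0 hx.2]
  have h3 : IntegrableOn (fun x : ℝ => x ^ (-1:ℝ)) (Ioo (0:ℝ) δ) := by
    have h4 := hint2.const_mul ε⁻¹
    simpa [IntegrableOn, ← mul_assoc, inv_mul_cancel₀ hε.ne'] using h4
  rw [intervalIntegral.integrableOn_Ioo_rpow_iff hδ] at h3
  linarith

/-- The auxiliary function for integration by parts. -/
noncomputable def Uf (w : ℝ → ℝ) (g : ℝ → ℂ) (r : ℝ) : ℝ :=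
  (w r * deriv w r / 2 - (w r)^2/(2*r)) * ‖g r‖^2

/-- The derivative of `Uf`. -/
noncomputable def Ud (w : ℝ → ℝ) (g : ℝ → ℂ) (r : ℝ) : ℝ :=
  (((deriv w r)^2 + w r * deriv (deriv w) r)/2 - w r * deriv w r/r + (w r)^2/(2*r^2))
      * ((g r).re^2 + (g r).im^2)
    + (w r * deriv w r / 2 - (w r)^2/(2*r))
      * (2*((g r).re*(deriv g r).re + (g r).im*(deriv g r).im))

lemma norm_sq_eq (z : ℂ) : ‖z‖^2 = z.re^2 + z.im^2 := by
  rw [Complex.sq_norm, Complex.normSq_apply]; ring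

lemma Uf_hasDeriv (w : ℝ → ℝ) (g : ℝ → ℂ) (r : ℝ) (hr : 0 < r)
    (hw : HasDerivAt w (deriv w r) r)
    (hw1 : HasDerivAt (deriv w) (deriv (deriv w) r) r)
    (hg : HasDerivAt g (deriv g r) r) :
    HasDerivAt (Uf w g) (Ud w g r) r := by
  have hrne : r ≠ 0 := ne_of_gt hr
  have hre : HasDerivAt (fun t => (g t).re) ((deriv g r).re) r :=
    Complex.reCLM.hasFDerivAt.comp_hasDerivAt r hg
  have him : HasDerivAt (fun t => (g t).im) ((deriv g r).im) r :=
    Complex.imCLM.hasFDerivAt.comp_hasDerivAt r hg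
  have hG : HasDerivAt (fun t => ‖g t‖^2)
      ((deriv g r).re * (g r).re + (g r).re * (deriv g r).re
        + ((deriv g r).im * (g r).im + (g r).im * (deriv g r).im)) r := by
    have h1 := (hre.mul hre).add (him.mul him)
    have heq : (fun t => ‖g t‖^2) = fun t => (g t).re*(g t).re + (g t).im*(g t).im := by
      funext t
      rw [norm_sq_eq]; ring
    rw [heq]
    exact h1
  have h2 := (hw.mul hw1).div_const 2
  have hid : HasDerivAt (fun t : ℝ => 2*t) 2 r := by
    simpa using (hasDerivAt_id r).const_mul (2:ℝ)
  have h3 := (hw.pow 2).div hid (by simpa using hrne)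
  have hA := (h2.sub h3).mul hG
  have hfun : (fun t => (w t * deriv w t / 2 - (w t)^2/(2*t)) * ‖g t‖^2) = Uf w g := rfl
  replace hA : HasDerivAt (Uf w g) _ r := hA
  convert hA using 1
  simp only [Ud, norm_sq_eq, Pi.sub_apply, Pi.div_apply, Pi.mul_apply, Pi.pow_apply]
  norm_num
  field_simp
  ring

end HardyAux

open HardyAux

/-- Weighted Hardy inequality on the half-line. -/
theorem stmt_1 (w : ℝ → ℝ) (hw : ContDiffOn ℝ 2 w (Ioi (0:ℝ)))
    (hw_nonneg : ∀ r ∈ Ioi (0:ℝ), 0 ≤ w r)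
    (hw_mono : ∀ r ∈ Ioi (0:ℝ), deriv w r ≤ 0)
    (hw_ineq : ∀ r ∈ Ioi (0:ℝ),
      r * ((deriv w r) ^ 2 + 2 * w r * deriv (deriv w) r) ≥ 2 * w r * deriv w r)
    (g : ℝ → ℂ) (hg : ContDiffOn ℝ 1 g (Ioi (0:ℝ)))
    (hint : IntegrableOn
      (fun r => (w r) ^ 2 * ‖deriv g r‖ ^ 2 + (deriv w r) ^ 2 * ‖g r‖ ^ 2) (Ioi (0:ℝ)))
    (hliminf : liminf (fun r => w r * deriv w r * ‖g r‖ ^ 2) (nhdsWithin 0 (Ioi (0:ℝ))) = 0) :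
    ∫ r in Ioi (0:ℝ), (w r) ^ 2 * ‖g r‖ ^ 2 / r ^ 2
      ≤ 4 * ∫ r in Ioi (0:ℝ), (w r) ^ 2 * ‖deriv g r‖ ^ 2 := by
  have hOpen : IsOpen (Ioi (0:ℝ)) := isOpen_Ioi
  -- regularity facts
  have hwc : ContinuousOn w (Ioi 0) := hw.continuousOn
  have hw1d : ContDiffOn ℝ 1 (deriv w) (Ioi 0) := hw.deriv_of_isOpen hOpen (by norm_num)
  have hw1c : ContinuousOn (deriv w) (Ioi 0) := hw1d.continuousOn
  have hw2c : ContinuousOn (deriv (deriv w)) (Ioi 0) :=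
    hw1d.continuousOn_deriv_of_isOpen hOpen le_rfl
  have hgc : ContinuousOn g (Ioi 0) := hg.continuousOn
  have hg1c : ContinuousOn (deriv g) (Ioi 0) := hg.continuousOn_deriv_of_isOpen hOpen le_rfl
  have hwD : ∀ r ∈ Ioi (0:ℝ), HasDerivAt w (deriv w r) r := fun r hr =>
    ((hw.contDiffAt (hOpen.mem_nhds hr)).differentiableAt (by norm_num)).hasDerivAt
  have hw1D : ∀ r ∈ Ioi (0:ℝ), HasDerivAt (deriv w) (deriv (deriv w) r) r := fun r hr =>
    ((hw1d.contDiffAt (hOpen.mem_nhds hr)).differentiableAt one_ne_zero).hasDerivAt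
  have hgD : ∀ r ∈ Ioi (0:ℝ), HasDerivAt g (deriv g r) r := fun r hr =>
    ((hg.contDiffAt (hOpen.mem_nhds hr)).differentiableAt one_ne_zero).hasDerivAt
  by_cases hf1 : IntegrableOn (fun r => (w r) ^ 2 * ‖g r‖ ^ 2 / r ^ 2) (Ioi (0:ℝ))
  · -- Main case: the left-hand integrand is integrable.
    have key : ∀ a b : ℝ, 0 < a → a ≤ b →
        (∫ r in Ioc a b, (w r) ^ 2 * ‖g r‖ ^ 2 / r ^ 2)
          ≤ 4 * (∫ r in Ioc a b, (w r) ^ 2 * ‖deriv g r‖ ^ 2)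
            + 4 * (Uf w g b - Uf w g a) := by
      intro a b ha hab
      have hIcc : Icc a b ⊆ Ioi (0:ℝ) := fun x hx => lt_of_lt_of_le ha hx.1
      have huIcc : uIcc a b = Icc a b := uIcc_of_le hab
      have hrne : ∀ x ∈ Icc a b, x ≠ 0 := fun x hx => ne_of_gt (hIcc hx)
      have cw : ContinuousOn w (Icc a b) := hwc.mono hIcc
      have cw1 : ContinuousOn (deriv w) (Icc a b) := hw1c.mono hIcc
      have cw2 : ContinuousOn (deriv (deriv w)) (Icc a b) := hw2c.mono hIcc
      have cg : ContinuousOn g (Icc a b) := hgc.mono hIcc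
      have cg1 : ContinuousOn (deriv g) (Icc a b) := hg1c.mono hIcc
      have cgre : ContinuousOn (fun r => (g r).re) (Icc a b) :=
        Complex.continuous_re.comp_continuousOn cg
      have cgim : ContinuousOn (fun r => (g r).im) (Icc a b) :=
        Complex.continuous_im.comp_continuousOn cg
      have cg1re : ContinuousOn (fun r => (deriv g r).re) (Icc a b) :=
        Complex.continuous_re.comp_continuousOn cg1
      have cg1im : ContinuousOn (fun r => (deriv g r).im) (Icc a b) :=
        Complex.continuous_im.comp_continuousOn cg1
      have c1 : ContinuousOn (fun r => (w r) ^ 2 * ‖g r‖ ^ 2 / r ^ 2) (Icc a b) := by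
        apply ContinuousOn.div ((cw.pow 2).mul (cg.norm.pow 2))
          ((continuous_pow 2).continuousOn)
        exact fun x hx => pow_ne_zero 2 (hrne x hx)
      have c2 : ContinuousOn (fun r => (w r) ^ 2 * ‖deriv g r‖ ^ 2) (Icc a b) :=
        (cw.pow 2).mul (cg1.norm.pow 2)
      have c3 : ContinuousOn (Ud w g) (Icc a b) := by
        apply ContinuousOn.add
        · apply ContinuousOn.mul
          · apply ContinuousOn.add
            · apply ContinuousOn.sub
              · exact ((cw1.pow 2).add (cw.mul cw2)).div_const 2
              · exact ContinuousOn.div (cw.mul cw1) continuousOn_id hrne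
            · apply ContinuousOn.div (cw.pow 2)
                (continuous_const.mul (continuous_pow 2)).continuousOn
              intro x hx
              have hx0 := hrne x hx
              exact mul_ne_zero two_ne_zero (pow_ne_zero 2 hx0)
          · exact (cgre.pow 2).add (cgim.pow 2)
        · apply ContinuousOn.mul
          · apply ContinuousOn.sub
            · exact (cw.mul cw1).div_const 2
            · apply ContinuousOn.div (cw.pow 2)
                (continuous_const.mul continuous_id).continuousOn
              intro x hx
              have hx0 := hrne x hx
              simpa using hx0
          · exact continuousOn_const.mul ((cgre.mul cg1re).add (cgim.mul cg1im))
      have i1 : IntervalIntegrable (fun r => (w r) ^ 2 * ‖g r‖ ^ 2 / r ^ 2) volume a b := by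
        apply ContinuousOn.intervalIntegrable
        rw [huIcc]; exact c1
      have i2 : IntervalIntegrable (fun r => (w r) ^ 2 * ‖deriv g r‖ ^ 2) volume a b := by
        apply ContinuousOn.intervalIntegrable
        rw [huIcc]; exact c2
      have i3 : IntervalIntegrable (Ud w g) volume a b := by
        apply ContinuousOn.intervalIntegrable
        rw [huIcc]; exact c3
      have hFTC : ∫ r in a..b, Ud w g r = Uf w g b - Uf w g a := by
        apply intervalIntegral.integral_eq_sub_of_hasDerivAt _ i3
        intro x hx
        rw [huIcc] at hx
        exact Uf_hasDeriv w g x (hIcc hx) (hwD x (hIcc hx)) (hw1D x (hIcc hx)) (hgD x (hIcc hx))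
      have hmono2 : (∫ r in a..b, (w r) ^ 2 * ‖g r‖ ^ 2 / r ^ 2)
          ≤ ∫ r in a..b, (4 * ((w r) ^ 2 * ‖deriv g r‖ ^ 2) + 4 * Ud w g r) := by
        apply intervalIntegral.integral_mono_on hab i1 ((i2.const_mul 4).add (i3.const_mul 4))
        intro x hx
        have hx0 : (0:ℝ) < x := hIcc hx
        have hp := ptwise x (w x) (deriv w x) (deriv (deriv w) x) (g x).re (g x).im
          (deriv g x).re (deriv g x).im hx0
          (by have := hw_ineq x hx0; linarith)
        simp only [Ud]
        rw [norm_sq_eq (g x), norm_sq_eq (deriv g x)]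
        exact hp
      rw [intervalIntegral.integral_add (i2.const_mul 4) (i3.const_mul 4),
        intervalIntegral.integral_const_mul, intervalIntegral.integral_const_mul, hFTC]
        at hmono2
      rw [intervalIntegral.integral_of_le hab, intervalIntegral.integral_of_le hab] at hmono2
      exact hmono2
    -- integrability of the pieces
    have hq_meas : AEStronglyMeasurable (fun r => (w r) ^ 2 * ‖deriv g r‖ ^ 2)
        (volume.restrict (Ioi (0:ℝ))) :=
      ((hwc.pow 2).mul (hg1c.norm.pow 2)).aestronglyMeasurable measurableSet_Ioi
    have hq_int : IntegrableOn (fun r => (w r) ^ 2 * ‖deriv g r‖ ^ 2) (Ioi (0:ℝ)) := by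
      apply hint.mono' hq_meas
      filter_upwards [ae_restrict_mem measurableSet_Ioi] with x _
      rw [Real.norm_eq_abs, abs_of_nonneg (by positivity)]
      have h5 : 0 ≤ (deriv w x) ^ 2 * ‖g x‖ ^ 2 := by positivity
      linarith
    have hp_meas : AEStronglyMeasurable (fun r => (deriv w r) ^ 2 * ‖g r‖ ^ 2)
        (volume.restrict (Ioi (0:ℝ))) :=
      ((hw1c.pow 2).mul (hgc.norm.pow 2)).aestronglyMeasurable measurableSet_Ioi
    have hp_int : IntegrableOn (fun r => (deriv w r) ^ 2 * ‖g r‖ ^ 2) (Ioi (0:ℝ)) := by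
      apply hint.mono' hp_meas
      filter_upwards [ae_restrict_mem measurableSet_Ioi] with x _
      rw [Real.norm_eq_abs, abs_of_nonneg (by positivity)]
      have h5 : 0 ≤ (w x) ^ 2 * ‖deriv g x‖ ^ 2 := by positivity
      linarith
    have hH_int : IntegrableOn
        (fun r => (deriv w r) ^ 2 * ‖g r‖ ^ 2 + (w r) ^ 2 * ‖g r‖ ^ 2 / r ^ 2)
        (Ioi (0:ℝ)) := hp_int.add hf1
    have bound : ∀ m : ℕ, 1 ≤ m →
        (∫ r in Ioc (1/(m:ℝ)) (m:ℝ), (w r) ^ 2 * ‖g r‖ ^ 2 / r ^ 2)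
          ≤ 4 * (∫ r in Ioi (0:ℝ), (w r) ^ 2 * ‖deriv g r‖ ^ 2) + 4 * (1/(m:ℝ)) := by
      intro m hm
      have hm0 : (0:ℝ) < m := by exact_mod_cast hm
      have hm1 : (1:ℝ) ≤ m := by exact_mod_cast hm
      have hδ : (0:ℝ) < 1/m := by positivity
      obtain ⟨a, ha0, haδ, haH⟩ := small hH_int hδ hδ
      have hab : a ≤ (m:ℝ) := by
        apply le_trans haδ.le
        rw [div_le_iff₀ hm0]
        nlinarith
      have h1 : (∫ r in Ioc (1/(m:ℝ)) (m:ℝ), (w r) ^ 2 * ‖g r‖ ^ 2 / r ^ 2)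
          ≤ ∫ r in Ioc a (m:ℝ), (w r) ^ 2 * ‖g r‖ ^ 2 / r ^ 2 := by
        apply setIntegral_mono_set
          (hf1.mono (fun x hx => lt_of_lt_of_le ha0 hx.1.le) le_rfl)
        · filter_upwards [ae_restrict_mem measurableSet_Ioc] with x hx
          have hx0 : 0 < x := lt_of_lt_of_le ha0 hx.1.le
          positivity
        · exact (Ioc_subset_Ioc_left haδ.le).eventuallyLE
      have h2 := key a m ha0 hab
      have h3 : (∫ r in Ioc a (m:ℝ), (w r) ^ 2 * ‖deriv g r‖ ^ 2)
          ≤ ∫ r in Ioi (0:ℝ), (w r) ^ 2 * ‖deriv g r‖ ^ 2 := by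
        apply setIntegral_mono_set hq_int
        · filter_upwards [ae_restrict_mem measurableSet_Ioi] with x _
          positivity
        · exact HasSubset.Subset.eventuallyLE
            (fun x hx => lt_of_lt_of_le ha0 hx.1.le : Ioc a (m:ℝ) ⊆ Ioi 0)
      have hmem : (m:ℝ) ∈ Ioi (0:ℝ) := mem_Ioi.mpr hm0
      have hUb : Uf w g m ≤ 0 := by
        have h4 := hw_nonneg m hmem
        have h5 := hw_mono m hmem
        have h6 : w (m:ℝ) * deriv w (m:ℝ) / 2 - (w (m:ℝ))^2/(2*(m:ℝ)) ≤ 0 := by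
          have h7 : 0 ≤ (w (m:ℝ))^2/(2*(m:ℝ)) := by positivity
          nlinarith
        exact mul_nonpos_of_nonpos_of_nonneg h6 (by positivity)
      have hUa : -Uf w g a ≤ 1/m := by
        have h7 := bdry a (w a) (deriv w a) (‖g a‖^2) ha0 (by positivity)
        have h8 : a * ((deriv w a)^2 * ‖g a‖^2 + (w a)^2 * ‖g a‖^2 / a^2) ≤ 1/m := haH
        simp only [Uf]
        calc -((w a * deriv w a / 2 - (w a)^2/(2*a)) * ‖g a‖^2)
            ≤ a * ((deriv w a)^2 * ‖g a‖^2 + (w a)^2 * ‖g a‖^2 / a^2) := h7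
          _ ≤ 1/m := h8
      linarith
    have hsm : ∀ m : ℕ, MeasurableSet (Ioc (1/(m:ℝ)) (m:ℝ)) := fun m => measurableSet_Ioc
    have hmono3 : Monotone (fun m : ℕ => Ioc (1/(m:ℝ)) (m:ℝ)) := by
      intro m n hmn
      rcases Nat.eq_zero_or_pos m with h | h
      · subst h; simp
      · have hm0 : (0:ℝ) < m := by exact_mod_cast h
        exact Ioc_subset_Ioc (one_div_le_one_div_of_le hm0 (by exact_mod_cast hmn))
          (by exact_mod_cast hmn)
    have hUnion : (⋃ m : ℕ, Ioc (1/(m:ℝ)) (m:ℝ)) = Ioi (0:ℝ) := by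
      ext x
      simp only [mem_iUnion, mem_Ioc, mem_Ioi]
      constructor
      · rintro ⟨m, h1, h2⟩
        exact lt_of_le_of_lt (by positivity) h1
      · intro hx
        obtain ⟨m, hm⟩ := exists_nat_gt (max x (1/x))
        have hm0 : (0:ℝ) < m := lt_trans (lt_of_lt_of_le hx (le_max_left _ _)) hm
        refine ⟨m, ?_, (le_max_left x (1/x)).trans hm.le⟩
        rw [div_lt_iff₀ hm0]
        have h8 : 1/x < m := lt_of_le_of_lt (le_max_right _ _) hm
        rw [div_lt_iff₀ hx] at h8
        nlinarith
    have htend := tendsto_setIntegral_of_monotone hsm hmono3 (by rw [hUnion]; exact hf1)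
    rw [hUnion] at htend
    have htend2 : Tendsto
        (fun m : ℕ => 4 * (∫ r in Ioi (0:ℝ), (w r) ^ 2 * ‖deriv g r‖ ^ 2) + 4 * (1/(m:ℝ)))
        atTop (𝓝 (4 * ∫ r in Ioi (0:ℝ), (w r) ^ 2 * ‖deriv g r‖ ^ 2)) := by
      have h9 : Tendsto (fun m : ℕ => 4 * (1/(m:ℝ))) atTop (𝓝 0) := by
        have := tendsto_one_div_atTop_nhds_zero_nat (𝕜 := ℝ)
        simpa using this.const_mul (4:ℝ)
      simpa using tendsto_const_nhds.add h9
    exact le_of_tendsto_of_tendsto htend htend2 (eventually_atTop.2 ⟨1, bound⟩)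
  · rw [integral_undef hf1]
    have h0 : 0 ≤ ∫ r in Ioi (0:ℝ), (w r) ^ 2 * ‖deriv g r‖ ^ 2 :=
      setIntegral_nonneg measurableSet_Ioi (fun x _ => by positivity)
    linarith
end

section
/- Let $H$ be a Hilbert space and let $G$, $m$ be linear operators on (a dense domain of) $H$ with $m$ symmetric and bounded. Suppose $g \in H$ satisfies $\|(G - im)g\|^2 \geq 0$ and $\langle (G - im)g, (G-im)g \rangle = \|Gg\|^2 - \langle (wm' - m^2) g, g\rangle$ in the concrete setting $H = L^2((0,\infty))$, $G = \frac{1}{i}(w\partial_r + \frac{1}{2}w')$, $m(r) = -\frac{w(r)}{2r}$ with $w$ as in the weighted Hardy lemma. Then $\int_0^\infty \big(\tfrac{1}{4}(w')^2 + \tfrac{1}{2}ww'' + wm' - m^2\big)|g|^2\,dr \leq \int_0^\infty w^2 |g'|^2\,dr$, and since $\tfrac{1}{4}(w')^2 + \tfrac{1}{2}ww'' - \tfrac{ww'}{2r} + \tfrac{w^2}{4r^2} \geq \tfrac{w^2}{4r^2}$ under the condition $r(w'^2 + 2ww'') \geq 2ww'$, one concludes $\int_0^\infty \frac{w^2 |g|^2}{4r^2}\,dr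 \leq \int_0^\infty w^2 |g'|^2\,dr$. -/
open MeasureTheory Set Filter Real

lemma aux_inv_not_int {δ : ℝ} (hδ : 0 < δ) :
    ¬ IntegrableOn (fun r : ℝ => r⁻¹) (Ioo (0:ℝ) δ) := by
  intro h
  have h2 : IntegrableOn (fun r : ℝ => r ^ (-1 : ℝ)) (Ioo (0:ℝ) δ) := by
    refine h.congr_fun (fun x hx => ?_) measurableSet_Ioo
    rw [Real.rpow_neg_one]
  have := (intervalIntegral.integrableOn_Ioo_rpow_iff hδ).1 h2
  linarith

lemma aux_limit (f b : ℝ → ℝ) (I : ℝ)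
    (hfi : IntegrableOn f (Ioi (0:ℝ))) (hf0 : ∀ r ∈ Ioi (0:ℝ), 0 ≤ f r)
    (hmain : ∀ ε R : ℝ, 0 < ε → ε ≤ R → ∫ r in ε..R, f r ≤ I + b ε)
    (hb : ∀ c > (0:ℝ), ∀ δ > (0:ℝ), ∃ ε ∈ Ioo (0:ℝ) δ, b ε < c) :
    ∫ r in Ioi (0:ℝ), f r ≤ I := by
  refine le_of_forall_pos_le_add (fun c hc => ?_)
  set s : ℕ → Set ℝ := fun n => Ioc (1/(n+1) : ℝ) n with hs
  have hsm : ∀ n, MeasurableSet (s n) := fun n => measurableSet_Ioc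
  have hmono : Monotone s := by
    intro a b' hab
    apply Ioc_subset_Ioc
    · apply one_div_le_one_div_of_le (by positivity)
      have : (a:ℝ) ≤ b' := by exact_mod_cast hab
      linarith
    · exact_mod_cast hab
  have hU : (⋃ n, s n) = Ioi (0:ℝ) := by
    ext x
    simp only [hs, mem_iUnion, mem_Ioc, mem_Ioi]
    constructor
    · rintro ⟨n, h1, _⟩
      have : (0:ℝ) < 1/((n:ℝ)+1) := by positivity
      linarith
    · intro hx
      obtain ⟨n, hn⟩ := exists_nat_gt (max x (1/x))
      refine ⟨n, ?_, ((le_max_left x (1/x)).trans hn.le)⟩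
      have h1 : 1/x < (n:ℝ) + 1 := by
        have := (le_max_right x (1/x)).trans_lt hn
        linarith
      rw [div_lt_iff₀ (by positivity)]
      have := (div_lt_iff₀ hx).1 h1
      linarith [mul_pos hx (by positivity : (0:ℝ) < (n:ℝ)+1)]
  have htend := tendsto_setIntegral_of_monotone hsm hmono (hU ▸ hfi)
  rw [hU] at htend
  have hev : ∀ᶠ n in atTop, (∫ r in Ioi (0:ℝ), f r) - c/2 < ∫ x in s n, f x :=
    htend.eventually (eventually_gt_nhds (by linarith))
  obtain ⟨N, hN⟩ := hev.exists
  set R : ℝ := max (N:ℝ) 1 with hR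
  obtain ⟨ε, hεmem, hεb⟩ := hb (c/2) (by linarith) (min (1/((N:ℝ)+1)) 1) (by positivity)
  have hε0 : 0 < ε := hεmem.1
  have hεN : ε ≤ 1/((N:ℝ)+1) := (hεmem.2.le).trans (min_le_left _ _)
  have hεR : ε ≤ R := le_trans (hεmem.2.le.trans (min_le_right _ _)) (le_max_right _ _)
  have hsub : s N ⊆ Ioc ε R := Ioc_subset_Ioc hεN (le_max_left _ _)
  have hIocsub : Ioc ε R ⊆ Ioi (0:ℝ) := fun x hx => lt_trans hε0 hx.1
  have h1 : ∫ x in s N, f x ≤ ∫ x in Ioc ε R, f x := by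
    refine setIntegral_mono_set (hfi.mono_set hIocsub) ?_ (HasSubset.Subset.eventuallyLE hsub)
    exact (ae_restrict_iff' measurableSet_Ioc).2 (ae_of_all _ (fun x hx => hf0 x (hIocsub hx)))
  have h2 : ∫ x in Ioc ε R, f x = ∫ r in ε..R, f r := (intervalIntegral.integral_of_le hεR).symm
  have h3 := hmain ε R hε0 hεR
  linarith [hN, h1, h2 ▸ h1]

set_option maxHeartbeats 2000000 in
/-- Operator-square step of the weighted Hardy inequality: with
`G = (1/i)(w ∂_r + w'/2)` and `m(r) = -w(r)/(2r)`, nonnegativity of `‖(G-im)g‖²`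
yields `∫ (¼(w')² + ½ww'' + wm' - m²)|g|² ≤ ∫ w²|g'|²`, and the pointwise bound
`¼(w')² + ½ww'' - ww'/(2r) + w²/(4r²) ≥ w²/(4r²)` (equivalent to
`r(w'² + 2ww'') ≥ 2ww'`) then gives `∫ w²|g|²/(4r²) ≤ ∫ w²|g'|²`. -/
theorem stmt_11 (w : ℝ → ℝ) (hw : ContDiffOn ℝ 2 w (Ioi (0:ℝ)))
    (hw_nonneg : ∀ r ∈ Ioi (0:ℝ), 0 ≤ w r)
    (hw_mono : ∀ r ∈ Ioi (0:ℝ), deriv w r ≤ 0)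
    (hw_ineq : ∀ r ∈ Ioi (0:ℝ),
      r * ((deriv w r) ^ 2 + 2 * w r * deriv (deriv w) r) ≥ 2 * w r * deriv w r)
    (g : ℝ → ℂ) (hg : ContDiffOn ℝ 1 g (Ioi (0:ℝ)))
    (hint : IntegrableOn
      (fun r => (w r) ^ 2 * ‖deriv g r‖ ^ 2 + (deriv w r) ^ 2 * ‖g r‖ ^ 2) (Ioi (0:ℝ)))
    (hliminf : liminf (fun r => w r * deriv w r * ‖g r‖ ^ 2) (nhdsWithin 0 (Ioi (0:ℝ))) = 0)
    (m : ℝ → ℝ) (hm : ∀ r : ℝ, 0 < r → m r = -(w r) / (2 * r)) :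
    (∫ r in Ioi (0:ℝ),
        ((deriv w r) ^ 2 / 4 + w r * deriv (deriv w) r / 2
          + w r * deriv m r - (m r) ^ 2) * ‖g r‖ ^ 2
      ≤ ∫ r in Ioi (0:ℝ), (w r) ^ 2 * ‖deriv g r‖ ^ 2)
    ∧ ∫ r in Ioi (0:ℝ), (w r) ^ 2 * ‖g r‖ ^ 2 / (4 * r ^ 2)
        ≤ ∫ r in Ioi (0:ℝ), (w r) ^ 2 * ‖deriv g r‖ ^ 2 := by
  have hnorm : ∀ z : ℂ, ‖z‖^2 = z.re*z.re + z.im*z.im := fun z => by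
    rw [Complex.sq_norm, Complex.normSq_apply]
  -- continuity facts
  have hcw : ContinuousOn w (Ioi (0:ℝ)) := hw.continuousOn
  have hdw1 : ContDiffOn ℝ 1 (deriv w) (Ioi (0:ℝ)) := hw.deriv_of_isOpen isOpen_Ioi (by norm_num)
  have hcw' : ContinuousOn (deriv w) (Ioi (0:ℝ)) := hdw1.continuousOn
  have hcw'' : ContinuousOn (deriv (deriv w)) (Ioi (0:ℝ)) :=
    hdw1.continuousOn_deriv_of_isOpen isOpen_Ioi le_rfl
  have hcg : ContinuousOn g (Ioi (0:ℝ)) := hg.continuousOn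
  have hcg' : ContinuousOn (deriv g) (Ioi (0:ℝ)) :=
    hg.continuousOn_deriv_of_isOpen isOpen_Ioi le_rfl
  have hgu : ContinuousOn (fun x => (g x).re) (Ioi (0:ℝ)) :=
    Complex.continuous_re.comp_continuousOn hcg
  have hgv : ContinuousOn (fun x => (g x).im) (Ioi (0:ℝ)) :=
    Complex.continuous_im.comp_continuousOn hcg
  have hgu' : ContinuousOn (fun x => (deriv g x).re) (Ioi (0:ℝ)) :=
    Complex.continuous_re.comp_continuousOn hcg'
  have hgv' : ContinuousOn (fun x => (deriv g x).im) (Ioi (0:ℝ)) :=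
    Complex.continuous_im.comp_continuousOn hcg'
  have hc2x : ContinuousOn (fun x : ℝ => 2*x) (Ioi (0:ℝ)) :=
    (continuous_const.mul continuous_id).continuousOn
  have hne2x : ∀ x ∈ Ioi (0:ℝ), (2*x : ℝ) ≠ 0 := fun x hx => by
    have : (0:ℝ) < x := hx; positivity
  have hc4x2 : ContinuousOn (fun x : ℝ => 4*x^2) (Ioi (0:ℝ)) :=
    (continuous_const.mul (continuous_pow 2)).continuousOn
  have hne4x2 : ∀ x ∈ Ioi (0:ℝ), (4*x^2 : ℝ) ≠ 0 := fun x hx => by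
    have : (0:ℝ) < x := hx; positivity
  -- component integrability from hint
  have hwgcont : ContinuousOn (fun r => (w r)^2 * ‖deriv g r‖^2) (Ioi (0:ℝ)) :=
    (hcw.pow 2).mul ((hcg'.norm).pow 2)
  have hw'gcont : ContinuousOn (fun r => (deriv w r)^2 * ‖g r‖^2) (Ioi (0:ℝ)) :=
    (hcw'.pow 2).mul ((hcg.norm).pow 2)
  have hint1 : IntegrableOn (fun r => (w r)^2 * ‖deriv g r‖^2) (Ioi (0:ℝ)) := by
    refine Integrable.mono' hint (hwgcont.aestronglyMeasurable measurableSet_Ioi)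
      (Eventually.of_forall (fun r => ?_))
    rw [Real.norm_eq_abs, abs_of_nonneg (by positivity)]
    exact le_add_of_nonneg_right (by positivity)
  have hint2 : IntegrableOn (fun r => (deriv w r)^2 * ‖g r‖^2) (Ioi (0:ℝ)) := by
    refine Integrable.mono' hint (hw'gcont.aestronglyMeasurable measurableSet_Ioi)
      (Eventually.of_forall (fun r => ?_))
    rw [Real.norm_eq_abs, abs_of_nonneg (by positivity)]
    exact le_add_of_nonneg_left (by positivity)
  have hI0 : (0:ℝ) ≤ ∫ r in Ioi (0:ℝ), (w r)^2 * ‖deriv g r‖^2 :=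
    setIntegral_nonneg measurableSet_Ioi (fun r _ => by positivity)
  -- continuity of the main integrands
  have hf2cont : ContinuousOn (fun r => (w r)^2 * ‖g r‖^2 / (4*r^2)) (Ioi (0:ℝ)) :=
    ((hcw.pow 2).mul ((hcg.norm).pow 2)).div hc4x2 hne4x2
  have hQncont : ContinuousOn (fun r =>
      ((deriv w r)^2/4 + w r * deriv (deriv w) r/2 - w r * deriv w r/(2*r)
        + (w r)^2/(4*r^2)) * ‖g r‖^2) (Ioi (0:ℝ)) := by
    refine ContinuousOn.mul ?_ ((hcg.norm).pow 2)
    exact ((((hcw'.pow 2).div_const 4).add ((hcw.mul hcw'').div_const 2)).sub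
      ((hcw.mul hcw').div hc2x hne2x)).add ((hcw.pow 2).div hc4x2 hne4x2)
  -- pointwise: f2 ≤ Qn on Ioi 0
  have hf2leQn : ∀ x ∈ Ioi (0:ℝ), (w x)^2 * ‖g x‖^2 / (4*x^2) ≤
      ((deriv w x)^2/4 + w x * deriv (deriv w) x/2 - w x * deriv w x/(2*x)
        + (w x)^2/(4*x^2)) * ‖g x‖^2 := by
    intro x hx
    have hx0 : (0:ℝ) < x := hx
    have hxne : x ≠ 0 := ne_of_gt hx0
    have hkey : (0:ℝ) ≤ (deriv w x)^2/4 + w x * deriv (deriv w) x/2 - w x * deriv w x/(2*x) := by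
      have h := hw_ineq x hx
      have hE : (deriv w x)^2/4 + w x * deriv (deriv w) x/2 - w x * deriv w x/(2*x)
          = (x * ((deriv w x)^2 + 2 * w x * deriv (deriv w) x) - 2 * w x * deriv w x)/(4*x) := by
        field_simp; ring
      rw [hE]
      exact div_nonneg (by linarith) (by positivity)
    have hn0 : (0:ℝ) ≤ ‖g x‖^2 := by positivity
    rw [← sub_nonneg]
    have E : ((deriv w x)^2/4 + w x * deriv (deriv w) x/2 - w x * deriv w x/(2*x)
          + (w x)^2/(4*x^2)) * ‖g x‖^2 - (w x)^2 * ‖g x‖^2 / (4*x^2)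
        = ((deriv w x)^2/4 + w x * deriv (deriv w) x/2 - w x * deriv w x/(2*x)) * ‖g x‖^2 := by
      ring
    rw [E]
    exact mul_nonneg hkey hn0
  have hf20 : ∀ r ∈ Ioi (0:ℝ), (0:ℝ) ≤ (w r)^2 * ‖g r‖^2 / (4*r^2) := fun r hr => by
    have : (0:ℝ) < r := hr; positivity
  -- the interval inequality for Qn
  have hmain : ∀ ε R : ℝ, 0 < ε → ε ≤ R →
      (∫ r in ε..R, ((deriv w r)^2/4 + w r * deriv (deriv w) r/2 - w r * deriv w r/(2*r)
          + (w r)^2/(4*r^2)) * ‖g r‖^2)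
        ≤ (∫ r in Ioi (0:ℝ), (w r)^2 * ‖deriv g r‖^2)
          + ((w ε)^2/(2*ε) - w ε * deriv w ε/2) * ‖g ε‖^2 := by
    intro ε R hε hεR
    have hRpos : (0:ℝ) < R := lt_of_lt_of_le hε hεR
    have hsub : uIcc ε R ⊆ Ioi (0:ℝ) := by
      rw [uIcc_of_le hεR]; exact fun x hx => lt_of_lt_of_le hε hx.1
    set D : ℝ → ℝ := fun r =>
      ((deriv w r * deriv w r + w r * deriv (deriv w) r)/2
          - ((2:ℝ) * w r ^ 1 * deriv w r * (2*r) - (w r)^2 * 2)/(2*r)^2)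
            * ((g r).re*(g r).re + (g r).im*(g r).im)
        + (w r * deriv w r / 2 - (w r)^2/(2*r))
            * ((deriv g r).re*(g r).re + (g r).re*(deriv g r).re
              + ((deriv g r).im*(g r).im + (g r).im*(deriv g r).im)) with hD
    set Ff : ℝ → ℝ := fun x => (w x * deriv w x / 2 - (w x)^2/(2*x))
        * ((g x).re*(g x).re + (g x).im*(g x).im) with hFf
    have hF : ∀ x ∈ uIcc ε R, HasDerivAt Ff (D x) x := by
      intro r hruIcc
      have hr : r ∈ Ioi (0:ℝ) := hsub hruIcc
      have hr0 : (0:ℝ) < r := hr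
      have h2r : (2*r : ℝ) ≠ 0 := by positivity
      have hgr : HasDerivAt g (deriv g r) r :=
        ((hg.contDiffAt (isOpen_Ioi.mem_nhds hr)).differentiableAt one_ne_zero).hasDerivAt
      have hu : HasDerivAt (fun x => (g x).re) (deriv g r).re r := by
        exact (Complex.reCLM.hasFDerivAt.comp_hasDerivAt r hgr)
      have hv : HasDerivAt (fun x => (g x).im) (deriv g r).im r := by
        exact (Complex.imCLM.hasFDerivAt.comp_hasDerivAt r hgr)
      have hw1 : HasDerivAt w (deriv w r) r :=
        ((hw.contDiffAt (isOpen_Ioi.mem_nhds hr)).differentiableAt (by norm_num)).hasDerivAt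
      have hw2 : HasDerivAt (deriv w) (deriv (deriv w) r) r :=
        ((hdw1.contDiffAt (isOpen_Ioi.mem_nhds hr)).differentiableAt one_ne_zero).hasDerivAt
      have hN : HasDerivAt (fun x => (g x).re*(g x).re + (g x).im*(g x).im)
          ((deriv g r).re*(g r).re + (g r).re*(deriv g r).re
            + ((deriv g r).im*(g r).im + (g r).im*(deriv g r).im)) r := (hu.mul hu).add (hv.mul hv)
      have hC1 : HasDerivAt (fun x => w x * deriv w x / 2)
          ((deriv w r * deriv w r + w r * deriv (deriv w) r)/2) r := (hw1.mul hw2).div_const 2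
      have hd2 : HasDerivAt (fun x : ℝ => 2*x) 2 r := by
        simpa using (hasDerivAt_id r).const_mul (2:ℝ)
      have hC2 : HasDerivAt (fun x => (w x)^2 / (2*x))
          (((2:ℝ) * w r ^ 1 * deriv w r * (2*r) - (w r)^2 * 2)/(2*r)^2) r :=
        (hw1.pow 2).div hd2 h2r
      exact (hC1.sub hC2).mul hN
    have hDcont : ContinuousOn D (Ioi (0:ℝ)) := by
      rw [hD]
      refine ContinuousOn.add (ContinuousOn.mul (ContinuousOn.sub ?_ ?_) ?_)
        (ContinuousOn.mul (ContinuousOn.sub ?_ ?_) ?_)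
      · exact ((hcw'.mul hcw').add (hcw.mul hcw'')).div_const 2
      · exact ((((continuousOn_const.mul (hcw.pow 1)).mul hcw').mul hc2x).sub
          ((hcw.pow 2).mul continuousOn_const)).div (hc2x.pow 2)
          (fun x hx => by have : (0:ℝ) < x := hx; positivity)
      · exact (hgu.mul hgu).add (hgv.mul hgv)
      · exact (hcw.mul hcw').div_const 2
      · exact (hcw.pow 2).div hc2x hne2x
      · exact ((hgu'.mul hgu).add (hgu.mul hgu')).add ((hgv'.mul hgv).add (hgv.mul hgv'))
    have hDint : IntervalIntegrable D volume ε R := (hDcont.mono hsub).intervalIntegrable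
    have hFTC : ∫ x in ε..R, D x = Ff R - Ff ε :=
      intervalIntegral.integral_eq_sub_of_hasDerivAt hF hDint
    have hint_wg : IntervalIntegrable (fun r => (w r)^2 * ‖deriv g r‖^2) volume ε R :=
      (hwgcont.mono hsub).intervalIntegrable
    have hint_Qn : IntervalIntegrable (fun r =>
        ((deriv w r)^2/4 + w r * deriv (deriv w) r/2 - w r * deriv w r/(2*r)
          + (w r)^2/(4*r^2)) * ‖g r‖^2) volume ε R := (hQncont.mono hsub).intervalIntegrable
    have hptw : ∀ x ∈ Icc ε R,
        ((deriv w x)^2/4 + w x * deriv (deriv w) x/2 - w x * deriv w x/(2*x)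
          + (w x)^2/(4*x^2)) * ‖g x‖^2 ≤ (w x)^2 * ‖deriv g x‖^2 + D x := by
      intro x hx
      have hx0 : (0:ℝ) < x := hsub (by rw [uIcc_of_le hεR]; exact hx)
      have hxne : x ≠ 0 := ne_of_gt hx0
      simp only [hD, hnorm]
      rw [← sub_nonneg]
      have E : (w x)^2*((deriv g x).re*(deriv g x).re + (deriv g x).im*(deriv g x).im)
          + (((deriv w x * deriv w x + w x * deriv (deriv w) x)/2
              - ((2:ℝ) * w x ^ 1 * deriv w x * (2*x) - (w x)^2 * 2)/(2*x)^2)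
                * ((g x).re*(g x).re + (g x).im*(g x).im)
            + (w x * deriv w x / 2 - (w x)^2/(2*x))
                * ((deriv g x).re*(g x).re + (g x).re*(deriv g x).re
                  + ((deriv g x).im*(g x).im + (g x).im*(deriv g x).im)))
          - ((deriv w x)^2/4 + w x * deriv (deriv w) x/2 - w x * deriv w x/(2*x)
              + (w x)^2/(4*x^2)) * ((g x).re*(g x).re + (g x).im*(g x).im)
          = (w x*(deriv g x).re + (deriv w x/2 - w x/(2*x))*(g x).re)^2
            + (w x*(deriv g x).im + (deriv w x/2 - w x/(2*x))*(g x).im)^2 := by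
        field_simp
        ring
      rw [E]
      positivity
    have step1 : (∫ r in ε..R, ((deriv w r)^2/4 + w r * deriv (deriv w) r/2
          - w r * deriv w r/(2*r) + (w r)^2/(4*r^2)) * ‖g r‖^2)
        ≤ ∫ r in ε..R, ((w r)^2 * ‖deriv g r‖^2 + D r) :=
      intervalIntegral.integral_mono_on hεR hint_Qn (hint_wg.add hDint) hptw
    have step2 : ∫ r in ε..R, ((w r)^2 * ‖deriv g r‖^2 + D r)
        = (∫ r in ε..R, (w r)^2 * ‖deriv g r‖^2) + (Ff R - Ff ε) := by
      rw [intervalIntegral.integral_add hint_wg hDint, hFTC]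
    have step3 : (∫ r in ε..R, (w r)^2 * ‖deriv g r‖^2)
        ≤ ∫ r in Ioi (0:ℝ), (w r)^2 * ‖deriv g r‖^2 := by
      rw [intervalIntegral.integral_of_le hεR]
      refine setIntegral_mono_set hint1 (Eventually.of_forall (fun x => by positivity))
        (HasSubset.Subset.eventuallyLE (fun x hx => lt_trans hε hx.1))
    have hFR : Ff R ≤ 0 := by
      simp only [hFf]
      have h1 := hw_nonneg R hRpos
      have h2 := hw_mono R hRpos
      have h3 : (0:ℝ) ≤ (w R)^2/(2*R) := by positivity
      have h4 : (0:ℝ) ≤ (g R).re*(g R).re + (g R).im*(g R).im := by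
        nlinarith [sq_nonneg (g R).re, sq_nonneg (g R).im]
      exact mul_nonpos_of_nonpos_of_nonneg (by nlinarith) h4
    have hFe : -Ff ε = ((w ε)^2/(2*ε) - w ε * deriv w ε/2) * ‖g ε‖^2 := by
      simp only [hFf, hnorm]
      ring
    linarith [step1, step2 ▸ step1, step3]
  -- bound for interval integral of f2
  have hmain2 : ∀ ε R : ℝ, 0 < ε → ε ≤ R →
      (∫ r in ε..R, (w r)^2 * ‖g r‖^2 / (4*r^2))
        ≤ (∫ r in Ioi (0:ℝ), (w r)^2 * ‖deriv g r‖^2)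
          + ((w ε)^2/(2*ε) - w ε * deriv w ε/2) * ‖g ε‖^2 := by
    intro ε R hε hεR
    have hsub : uIcc ε R ⊆ Ioi (0:ℝ) := by
      rw [uIcc_of_le hεR]; exact fun x hx => lt_of_lt_of_le hε hx.1
    have h1 : (∫ r in ε..R, (w r)^2 * ‖g r‖^2 / (4*r^2))
        ≤ ∫ r in ε..R, ((deriv w r)^2/4 + w r * deriv (deriv w) r/2
            - w r * deriv w r/(2*r) + (w r)^2/(4*r^2)) * ‖g r‖^2 := by
      refine intervalIntegral.integral_mono_on hεR ((hf2cont.mono hsub).intervalIntegrable)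
        ((hQncont.mono hsub).intervalIntegrable) (fun x hx => ?_)
      exact hf2leQn x (hsub (by rw [uIcc_of_le hεR]; exact hx))
    exact h1.trans (hmain ε R hε hεR)
  -- the equality of the goal integrand with Qn
  have hEq1 : ∀ r ∈ Ioi (0:ℝ),
      ((deriv w r)^2/4 + w r * deriv (deriv w) r/2 + w r * deriv m r - (m r)^2) * ‖g r‖^2
        = ((deriv w r)^2/4 + w r * deriv (deriv w) r/2 - w r * deriv w r/(2*r)
            + (w r)^2/(4*r^2)) * ‖g r‖^2 := by
    intro r hr
    have hr0 : (0:ℝ) < r := hr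
    have hrne : r ≠ 0 := ne_of_gt hr0
    have h2r : (2*r : ℝ) ≠ 0 := by positivity
    have hw1 : HasDerivAt w (deriv w r) r :=
      ((hw.contDiffAt (isOpen_Ioi.mem_nhds hr)).differentiableAt (by norm_num)).hasDerivAt
    have hd2 : HasDerivAt (fun x : ℝ => 2*x) 2 r := by
      simpa using (hasDerivAt_id r).const_mul (2:ℝ)
    have hev : m =ᶠ[nhds r] (fun x => -(w x)/(2*x)) :=
      eventually_of_mem (isOpen_Ioi.mem_nhds hr) (fun x hx => hm x hx)
    have hdm : deriv m r = (-(deriv w r) * (2*r) - -(w r) * 2)/(2*r)^2 := by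
      rw [hev.deriv_eq]
      exact ((hw1.neg).div hd2 h2r).deriv
    rw [hdm, hm r hr0]
    congr 1
    field_simp
    ring
  -- case analysis on integrability
  by_cases h2int : IntegrableOn (fun r => (w r)^2 * ‖g r‖^2 / (4*r^2)) (Ioi (0:ℝ))
  · -- f2 integrable: boundary control available
    have hb : ∀ c > (0:ℝ), ∀ δ > (0:ℝ), ∃ ε ∈ Ioo (0:ℝ) δ,
        ((w ε)^2/(2*ε) - w ε * deriv w ε/2) * ‖g ε‖^2 < c := by
      by_contra hcon
      push_neg at hcon
      obtain ⟨c, hc, δ, hδ, hall⟩ := hcon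
      have hpt : ∀ x ∈ Ioo (0:ℝ) δ,
          c/3 * x⁻¹ ≤ (w x)^2 * ‖g x‖^2 / (4*x^2) + (deriv w x)^2 * ‖g x‖^2 := by
        intro x hx
        have hx0 : (0:ℝ) < x := hx.1
        have hxne : x ≠ 0 := ne_of_gt hx0
        have h1 := hall x hx
        have h2 : ((w x)^2/(2*x) - w x * deriv w x/2) * ‖g x‖^2
            ≤ 3*x*((w x)^2 * ‖g x‖^2 / (4*x^2) + (deriv w x)^2 * ‖g x‖^2) := by
          rw [← sub_nonneg]
          have E : 3*x*((w x)^2 * ‖g x‖^2 / (4*x^2) + (deriv w x)^2 * ‖g x‖^2)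
              - ((w x)^2/(2*x) - w x * deriv w x/2) * ‖g x‖^2
              = ‖g x‖^2 * ((w x + x*deriv w x)^2 + 11*x^2*(deriv w x)^2)/(4*x) := by
            field_simp
            ring
          rw [E]
          positivity
        have h3 : c ≤ 3*x*((w x)^2 * ‖g x‖^2 / (4*x^2) + (deriv w x)^2 * ‖g x‖^2) :=
          le_trans h1 h2
        have hcne : c ≠ 0 := ne_of_gt hc
        have h4 : c/3 * x⁻¹ = c/(3*x) := by field_simp
        rw [h4, div_le_iff₀ (by positivity : (0:ℝ) < 3*x)]
        ring_nf
        ring_nf at h3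
        linarith
      have hsum0 : IntegrableOn
          (fun x => (w x)^2 * ‖g x‖^2 / (4*x^2) + (deriv w x)^2 * ‖g x‖^2) (Ioi (0:ℝ)) :=
        h2int.add hint2
      have hintsum : IntegrableOn
          (fun x => (w x)^2 * ‖g x‖^2 / (4*x^2) + (deriv w x)^2 * ‖g x‖^2) (Ioo (0:ℝ) δ) :=
        hsum0.mono_set Ioo_subset_Ioi_self
      have hcinv : ContinuousOn (fun x : ℝ => c/3 * x⁻¹) (Ioo (0:ℝ) δ) :=
        continuousOn_const.mul (continuousOn_id.inv₀ (fun x hx => ne_of_gt hx.1))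
      have hiinv : IntegrableOn (fun x : ℝ => c/3 * x⁻¹) (Ioo (0:ℝ) δ) := by
        refine Integrable.mono' hintsum (hcinv.aestronglyMeasurable measurableSet_Ioo) ?_
        refine (ae_restrict_iff' measurableSet_Ioo).2 (ae_of_all _ (fun x hx => ?_))
        have hx0 : (0:ℝ) < x := hx.1
        rw [Real.norm_eq_abs, abs_of_nonneg (by positivity)]
        exact hpt x hx
      have hfin : IntegrableOn (fun x : ℝ => x⁻¹) (Ioo (0:ℝ) δ) := by
        have hcne : c ≠ 0 := ne_of_gt hc
        have h5 : IntegrableOn (fun x : ℝ => 3/c * (c/3 * x⁻¹)) (Ioo (0:ℝ) δ) :=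
          Integrable.const_mul hiinv (3/c)
        refine h5.congr_fun (fun x hx => ?_) measurableSet_Ioo
        have hxne : x ≠ 0 := ne_of_gt hx.1
        field_simp
      exact aux_inv_not_int hδ hfin
    constructor
    · by_cases h1int : IntegrableOn (fun r =>
          ((deriv w r)^2/4 + w r * deriv (deriv w) r/2 + w r * deriv m r - (m r)^2) * ‖g r‖^2)
          (Ioi (0:ℝ))
      · refine aux_limit _ (fun ε => ((w ε)^2/(2*ε) - w ε * deriv w ε/2) * ‖g ε‖^2) _
          h1int ?_ ?_ hb
        · intro r hr
          rw [hEq1 r hr]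
          exact le_trans (hf20 r hr) (hf2leQn r hr)
        · intro ε R hε hεR
          have hsub : uIcc ε R ⊆ Ioi (0:ℝ) := by
            rw [uIcc_of_le hεR]; exact fun x hx => lt_of_lt_of_le hε hx.1
          rw [intervalIntegral.integral_congr (fun x hx => hEq1 x (hsub hx))]
          exact hmain ε R hε hεR
      · rw [integral_undef h1int]
        exact hI0
    · exact aux_limit _ (fun ε => ((w ε)^2/(2*ε) - w ε * deriv w ε/2) * ‖g ε‖^2) _
        h2int hf20 hmain2 hb
  · constructor
    · have hnot1 : ¬ IntegrableOn (fun r =>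
          ((deriv w r)^2/4 + w r * deriv (deriv w) r/2 + w r * deriv m r - (m r)^2) * ‖g r‖^2)
          (Ioi (0:ℝ)) := by
        intro h1
        apply h2int
        have hQint : IntegrableOn (fun r =>
            ((deriv w r)^2/4 + w r * deriv (deriv w) r/2 - w r * deriv w r/(2*r)
              + (w r)^2/(4*r^2)) * ‖g r‖^2) (Ioi (0:ℝ)) :=
          h1.congr_fun (fun x hx => hEq1 x hx) measurableSet_Ioi
        refine Integrable.mono' hQint (hf2cont.aestronglyMeasurable measurableSet_Ioi) ?_
        refine (ae_restrict_iff' measurableSet_Ioi).2 (ae_of_all _ (fun x hx => ?_))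
        have hx0 : (0:ℝ) < x := hx
        rw [Real.norm_eq_abs, abs_of_nonneg (by positivity)]
        exact hf2leQn x hx
      rw [integral_undef hnot1]
      exact hI0
    · rw [integral_undef h2int]
      exact hI0
end
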